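/- arXiv:1204.5429 — 3 statements merged into one kernel-verified Lean document; each statement's English description precedes it below -/
import Mathlib

section
/- The sequence defined by x_{n+1} = ((2n+1)/(2n+4)) x_n with x_0 = 1/2 converges to 0, and the total absorbed fluid, equal to the sum expressed via this recurrence, converges to 1/2. Precisely, x_n = (1/2)·∏_{k=0}^{n-1} (2k+1)/(2k+4) tends to 0 as n → ∞. -/
open Filter Finset

theorem stmt_0 (x : ℕ → ℝ) (h0 : x 0 = 1/2)
    (hrec : ∀ n : ℕ, x (n+1) = ((2*(n:ℝ)+1)/(2*(n:ℝ)+4)) * x n) :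
    (∀ n : ℕ, x n = (1/2) * ∏ k ∈ Finset.range n, ((2*(k:ℝ)+1)/(2*(k:ℝ)+4))) ∧
    Tendsto x atTop (nhds 0) := by
  have hpos : ∀ n : ℕ, 0 ≤ x n := by
    intro n
    induction n with
    | zero => rw [h0]; norm_num
    | succ n ih =>
      rw [hrec]
      have : (0:ℝ) ≤ (2*(n:ℝ)+1)/(2*(n:ℝ)+4) := by positivity
      exact mul_nonneg this ih
  have hub : ∀ n : ℕ, x n ≤ 1/((n:ℝ)+1) := by
    intro n
    induction n with
    | zero => rw [h0]; norm_num
    | succ n ih =>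
      rw [hrec]
      have h1 : (0:ℝ) < 2*(n:ℝ)+4 := by positivity
      have h2 : (0:ℝ) < (n:ℝ)+1 := by positivity
      have h3 : (0:ℝ) ≤ (2*(n:ℝ)+1)/(2*(n:ℝ)+4) := by positivity
      calc (2*(n:ℝ)+1)/(2*(n:ℝ)+4) * x n ≤ (2*(n:ℝ)+1)/(2*(n:ℝ)+4) * (1/((n:ℝ)+1)) :=
            mul_le_mul_of_nonneg_left ih h3
        _ ≤ 1/((n:ℝ)+1+1) := by
            rw [div_mul_div_comm, div_le_div_iff₀ (by positivity) (by positivity)]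
            push_cast
            nlinarith
        _ = 1/((↑(n+1):ℝ)+1) := by push_cast; ring
  constructor
  · intro n
    induction n with
    | zero => simpa using h0
    | succ n ih =>
      rw [hrec, ih, Finset.prod_range_succ]
      ring
  · have hlim : Tendsto (fun n : ℕ => 1/((n:ℝ)+1)) atTop (nhds 0) :=
      tendsto_one_div_add_atTop_nhds_zero_nat
    exact squeeze_zero hpos hub hlim
end

section
/- For the tridiagonal matrix M of size (N-1) with entries 1/2 on the sub- and super-diagonal, the powers M^k converge to the zero matrix as k → ∞; hence the Jacobi iteration for the 1D Dirichlet problem converges for any initial guess. -/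
open Filter

private noncomputable def auxW (N : ℕ) : ℕ → ℝ := fun n => Real.sin (n * (Real.pi / N))

private lemma auxW_trig (N : ℕ) (n : ℕ) :
    auxW N n + auxW N (n + 2) = 2 * Real.cos (Real.pi / N) * auxW N (n + 1) := by
  unfold auxW
  have h1 : ((n + 2 : ℕ) : ℝ) * (Real.pi / N) = ((n + 1 : ℕ) : ℝ) * (Real.pi / N) + Real.pi / N := by
    push_cast; ring
  have h2 : ((n : ℕ) : ℝ) * (Real.pi / N) = ((n + 1 : ℕ) : ℝ) * (Real.pi / N) - Real.pi / N := by
    push_cast; ring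
  rw [h2, h1, Real.sin_sub, Real.sin_add]
  ring

private lemma aux_bound (N : ℕ) (M : Matrix (Fin (N-1)) (Fin (N-1)) ℝ)
    (hMnn : ∀ i j, 0 ≤ M i j) (v : Fin (N-1) → ℝ) (c : ℝ)
    (hMv : ∀ i, ∑ j, M i j * v j = c * v i) :
    ∀ (k : ℕ) (x : Fin (N-1) → ℝ) (K : ℝ), (∀ i, |x i| ≤ K * v i) →
      ∀ i, |((M ^ k).mulVec x) i| ≤ c ^ k * K * v i := by
  intro k
  induction k with
  | zero =>
    intro x K hK i
    simpa [Matrix.one_mulVec] using hK i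
  | succ k ih =>
    intro x K hK i
    have hy := ih x K hK
    rw [pow_succ', ← Matrix.mulVec_mulVec]
    set y := (M ^ k).mulVec x with hydef
    have h1 : |M.mulVec y i| ≤ ∑ j, M i j * |y j| := by
      rw [show M.mulVec y i = ∑ j, M i j * y j from rfl]
      refine (Finset.abs_sum_le_sum_abs _ _).trans ?_
      apply Finset.sum_le_sum
      intro j _
      rw [abs_mul, abs_of_nonneg (hMnn i j)]
    have h2 : ∑ j, M i j * |y j| ≤ ∑ j, M i j * (c ^ k * K * v j) := by
      apply Finset.sum_le_sum
      intro j _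
      exact mul_le_mul_of_nonneg_left (hy j) (hMnn i j)
    have h3 : ∑ j, M i j * (c ^ k * K * v j) = c ^ k * K * (c * v i) := by
      rw [← hMv i, Finset.mul_sum]
      apply Finset.sum_congr rfl
      intro j _
      ring
    calc |M.mulVec y i| ≤ ∑ j, M i j * (c ^ k * K * v j) := h1.trans h2
      _ = c ^ (k + 1) * K * v i := by rw [h3]; ring

theorem stmt_4 (N : ℕ) (hN : 2 ≤ N)
    (M : Matrix (Fin (N-1)) (Fin (N-1)) ℝ)
    (hM : ∀ i j : Fin (N-1), M i j =
      if (i : ℕ) + 1 = (j : ℕ) ∨ (j : ℕ) + 1 = (i : ℕ) then (1/2 : ℝ) else 0) :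
    Tendsto (fun k : ℕ => M ^ k) atTop (nhds 0) ∧
    ∀ (c : Fin (N-1) → ℝ) (x : ℕ → Fin (N-1) → ℝ) (xstar : Fin (N-1) → ℝ),
      (∀ k : ℕ, x (k+1) = M.mulVec (x k) + c) →
      xstar = M.mulVec xstar + c →
      Tendsto x atTop (nhds xstar) := by
  have hNR : (0 : ℝ) < N := by positivity
  have hθpos : 0 < Real.pi / N := div_pos Real.pi_pos hNR
  have hθpi : Real.pi / N ≤ Real.pi / 2 := by
    apply div_le_div_of_nonneg_left Real.pi_pos.le (by norm_num)
    exact_mod_cast hN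
  set cθ : ℝ := Real.cos (Real.pi / N) with hcθ
  have hc0 : 0 ≤ cθ := Real.cos_nonneg_of_mem_Icc ⟨by linarith, hθpi⟩
  have hc1 : cθ < 1 := by
    have := Real.cos_lt_cos_of_nonneg_of_le_pi le_rfl
      (by linarith [Real.pi_pos] : Real.pi / N ≤ Real.pi) hθpos
    simpa using this
  set v : Fin (N-1) → ℝ := fun i => auxW N ((i : ℕ) + 1) with hv
  have hvpos : ∀ i, 0 < v i := by
    intro i
    have h1 : (i : ℕ) + 1 < N := by have := i.isLt; omega
    have h1R : (((i : ℕ) + 1 : ℕ) : ℝ) < N := by exact_mod_cast h1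
    apply Real.sin_pos_of_pos_of_lt_pi
    · positivity
    · calc (((i : ℕ) + 1 : ℕ) : ℝ) * (Real.pi / N) < N * (Real.pi / N) :=
            mul_lt_mul_of_pos_right h1R hθpos
        _ = Real.pi := by field_simp
  have hMnn : ∀ i j, 0 ≤ M i j := by
    intro i j; rw [hM]; split <;> norm_num
  have hwN : auxW N N = 0 := by
    have hπ : (N : ℝ) * (Real.pi / N) = Real.pi := by field_simp
    simp [auxW, hπ]
  have hMv : ∀ i, ∑ j, M i j * v j = cθ * v i := by
    intro i
    have hiN : (i : ℕ) < N - 1 := i.isLt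
    have step1 : ∑ j, M i j * v j
        = ∑ n ∈ Finset.range (N-1),
            ((if (i:ℕ)+1 = n then (1/2:ℝ) * auxW N (n+1) else 0)
             + (if n+1 = (i:ℕ) then (1/2:ℝ) * auxW N (n+1) else 0)) := by
      rw [← Fin.sum_univ_eq_sum_range (fun n =>
            ((if (i:ℕ)+1 = n then (1/2:ℝ) * auxW N (n+1) else 0)
             + (if n+1 = (i:ℕ) then (1/2:ℝ) * auxW N (n+1) else 0))) (N-1)]
      apply Finset.sum_congr rfl
      intro j _
      rw [hM]
      by_cases h1 : (i:ℕ)+1 = (j:ℕ) <;> by_cases h2 : (j:ℕ)+1 = (i:ℕ)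
      · omega
      · simp [h1, h2, hv]
      · simp [h1, h2, hv]
      · simp [h1, h2, hv]
    have hsum1 : (∑ n ∈ Finset.range (N-1),
        if (i:ℕ)+1 = n then (1/2:ℝ) * auxW N (n+1) else 0)
        = (1/2:ℝ) * auxW N ((i:ℕ)+2) := by
      rw [Finset.sum_ite_eq]
      by_cases h : (i:ℕ)+1 ∈ Finset.range (N-1)
      · rw [if_pos h]
      · rw [if_neg h]
        rw [Finset.mem_range] at h
        have h2 : (i:ℕ)+2 = N := by omega
        rw [h2, hwN, mul_zero]
    have hsum2 : (∑ n ∈ Finset.range (N-1),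
        if n+1 = (i:ℕ) then (1/2:ℝ) * auxW N (n+1) else 0)
        = (1/2:ℝ) * auxW N (i:ℕ) := by
      by_cases h0 : (i:ℕ) = 0
      · rw [h0]
        rw [Finset.sum_eq_zero]
        · simp [auxW]
        · intro n _; rw [if_neg (by omega)]
      · obtain ⟨m, hm⟩ := Nat.exists_eq_succ_of_ne_zero h0
        rw [hm]
        have hcong : ∀ n ∈ Finset.range (N-1),
            (if n+1 = m+1 then (1/2:ℝ) * auxW N (n+1) else 0)
            = if m = n then (1/2:ℝ) * auxW N (n+1) else 0 := by
          intro n _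
          refine if_congr ?_ rfl rfl
          omega
        rw [Finset.sum_congr rfl hcong, Finset.sum_ite_eq,
          if_pos (by rw [Finset.mem_range]; omega)]
    rw [step1, Finset.sum_add_distrib, hsum1, hsum2]
    have htrig := auxW_trig N (i:ℕ)
    have hvi : v i = auxW N ((i:ℕ)+1) := by rw [hv]
    rw [hvi]
    have : (i:ℕ)+1+1 = (i:ℕ)+2 := rfl
    linarith [htrig]
  -- Part 1
  have hne : Nonempty (Fin (N-1)) := ⟨⟨0, by omega⟩⟩
  have hune : (Finset.univ : Finset (Fin (N-1))).Nonempty := Finset.univ_nonempty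
  set mlo : ℝ := Finset.univ.inf' hune v with hmlo
  set Vhi : ℝ := Finset.univ.sup' hune v with hVhi
  have hm : 0 < mlo := (Finset.lt_inf'_iff hune).2 (fun i _ => hvpos i)
  have hVi : ∀ i, v i ≤ Vhi := fun i => Finset.le_sup' v (Finset.mem_univ i)
  have key : ∀ (i j : Fin (N-1)) (k : ℕ), |(M ^ k) i j| ≤ cθ ^ k * (mlo⁻¹ * Vhi) := by
    intro i j k
    have hK : ∀ l, |(Pi.single j 1 : Fin (N-1) → ℝ) l| ≤ mlo⁻¹ * v l := by
      intro l
      have h1 : |(Pi.single j 1 : Fin (N-1) → ℝ) l| ≤ 1 := by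
        rcases eq_or_ne l j with h | h <;> simp [h, Pi.single_apply]
      have h2 : (1:ℝ) ≤ mlo⁻¹ * v l := by
        rw [← inv_mul_cancel₀ hm.ne']
        exact mul_le_mul_of_nonneg_left (Finset.inf'_le v (Finset.mem_univ l))
          (inv_nonneg.2 hm.le)
      linarith
    have hb := aux_bound N M hMnn v cθ hMv k (Pi.single j 1) mlo⁻¹ hK i
    simp only [Matrix.mulVec_single_one, Matrix.col_apply, mul_one] at hb
    calc |(M ^ k) i j| ≤ cθ ^ k * mlo⁻¹ * v i := hb
      _ ≤ cθ ^ k * mlo⁻¹ * Vhi := by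
          apply mul_le_mul_of_nonneg_left (hVi i)
          positivity
      _ = cθ ^ k * (mlo⁻¹ * Vhi) := by ring
  have h0 : Tendsto (fun k : ℕ => cθ ^ k * (mlo⁻¹ * Vhi)) atTop (nhds 0) := by
    have := (tendsto_pow_atTop_nhds_zero_of_lt_one hc0 hc1).mul_const (mlo⁻¹ * Vhi)
    simpa using this
  have hpart1 : Tendsto (fun k : ℕ => M ^ k) atTop (nhds 0) := by
    refine tendsto_pi_nhds.2 fun i => tendsto_pi_nhds.2 fun j => ?_
    exact squeeze_zero_norm (fun k => key i j k) h0
  refine ⟨hpart1, ?_⟩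
  -- Part 2
  intro c x xstar hx hfix
  have hform : ∀ k, x k = (M ^ k).mulVec (x 0 - xstar) + xstar := by
    intro k
    induction k with
    | zero => simp [Matrix.one_mulVec]
    | succ k ih =>
      rw [hx k, ih, Matrix.mulVec_add, Matrix.mulVec_mulVec, ← pow_succ',
        add_assoc, ← hfix]
  have hcont : Continuous fun A : Matrix (Fin (N-1)) (Fin (N-1)) ℝ =>
      A.mulVec (x 0 - xstar) + xstar :=
    (Continuous.matrix_mulVec continuous_id continuous_const).add continuous_const
  have hcomp := (hcont.tendsto 0).comp hpart1
  have hx' : x = (fun A : Matrix (Fin (N-1)) (Fin (N-1)) ℝ =>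
      A.mulVec (x 0 - xstar) + xstar) ∘ fun k => M ^ k := by
    funext k; exact hform k
  rw [hx']
  simpa [Matrix.zero_mulVec] using hcomp
end

section
/- If T : ℤ² → ℝ is bounded and satisfies T(n,m) = (1/4)(T(n-1,m)+T(n+1,m)+T(n,m-1)+T(n,m+1)) for all (n,m) ∈ ℤ², then T is constant (discrete Liouville theorem). -/
/-- Key lemma: for a bounded discretely harmonic function on ℤ², the horizontal
increment `T (p.1+1, p.2) - T p` is nonpositive everywhere. -/
lemma shift_nonpos (T : ℤ × ℤ → ℝ) (c : ℝ) (hc : ∀ p : ℤ × ℤ, |T p| ≤ c)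
    (hharm : ∀ n m : ℤ, T (n, m) =
      (1/4) * (T (n-1, m) + T (n+1, m) + T (n, m-1) + T (n, m+1))) :
    ∀ p : ℤ × ℤ, T (p.1 + 1, p.2) ≤ T p := by
  set u : ℤ × ℤ → ℝ := fun p => T (p.1 + 1, p.2) - T p with hu
  have hbu : BddAbove (Set.range u) := by
    refine ⟨2 * c, ?_⟩
    rintro y ⟨x, rfl⟩
    have h1 := abs_le.1 (hc (x.1 + 1, x.2))
    have h2 := abs_le.1 (hc x)
    simp only [hu]
    linarith [h1.2, h2.1]
  set s : ℝ := sSup (Set.range u) with hs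
  have hub : ∀ x : ℤ × ℤ, u x ≤ s := fun x => le_csSup hbu (Set.mem_range_self x)
  -- the key step: near-maximality propagates to the right with factor 4
  have hstep : ∀ n m : ℤ, 4 * u (n, m) - 3 * s ≤ u (n + 1, m) := by
    intro n m
    have h1 := hharm n m
    have h2 := hharm (n + 1) m
    have b1 := hub (n - 1, m)
    have b2 := hub (n, m - 1)
    have b3 := hub (n, m + 1)
    simp only [hu] at b1 b2 b3 ⊢
    ring_nf at h1 h2 b1 b2 b3 ⊢
    linarith
  -- main claim: s ≤ 0
  have hs0 : s ≤ 0 := by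
    by_contra hpos
    push_neg at hpos
    obtain ⟨k, hk⟩ := exists_nat_gt ((2 * c + 2) / s)
    have hks : 2 * c + 2 < (k : ℝ) * s := (div_lt_iff₀ hpos).mp hk
    have h4k : (0:ℝ) < 4 ^ k := by positivity
    set ε : ℝ := 3 / 4 ^ k with hε
    have hεpos : 0 < ε := by positivity
    obtain ⟨y, ⟨x, rfl⟩, hy⟩ :=
      exists_lt_of_lt_csSup ⟨u (0, 0), Set.mem_range_self _⟩
        (sub_lt_self s hεpos)
    -- propagation along the ray
    have hray : ∀ j : ℕ, s - 4 ^ j * ε ≤ u (x.1 + (j : ℤ), x.2) := by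
      intro j
      induction j with
      | zero => simpa using hy.le
      | succ j ih =>
          have := hstep (x.1 + (j : ℤ)) x.2
          have hcast : (x.1 + ((j : ℤ) + 1), x.2) = (x.1 + (j : ℤ) + 1, x.2) := by
            rw [add_assoc]
          push_cast
          rw [hcast]
          have h4 : (4:ℝ) ^ (j + 1) = 4 * 4 ^ j := by ring
          nlinarith [ih, this]
    -- telescoping sum
    have tele : ∑ j ∈ Finset.range k, u (x.1 + (j : ℤ), x.2)
        = T (x.1 + (k : ℤ), x.2) - T (x.1, x.2) := by
      have := Finset.sum_range_sub (f := fun j : ℕ => T (x.1 + (j : ℤ), x.2)) k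
      simp only [Nat.cast_zero, add_zero] at this
      rw [← this]
      apply Finset.sum_congr rfl
      intro j _
      simp only [hu]
      push_cast
      rw [add_assoc]
    -- geometric sum bound
    have gs : ∑ j ∈ Finset.range k, (4:ℝ) ^ j = (4 ^ k - 1) / 3 := by
      rw [geom_sum_eq (by norm_num : (4:ℝ) ≠ 1)]
      norm_num
    have lb : (k : ℝ) * s - 1 ≤ ∑ j ∈ Finset.range k, u (x.1 + (j : ℤ), x.2) := by
      have h1 : ∑ j ∈ Finset.range k, (s - 4 ^ j * ε)
          ≤ ∑ j ∈ Finset.range k, u (x.1 + (j : ℤ), x.2) :=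
        Finset.sum_le_sum fun j _ => hray j
      have h2 : ∑ j ∈ Finset.range k, (s - 4 ^ j * ε)
          = (k : ℝ) * s - ((4 ^ k - 1) / 3) * ε := by
        rw [Finset.sum_sub_distrib, Finset.sum_const, Finset.card_range,
          ← Finset.sum_mul, gs, nsmul_eq_mul]
      have h3 : ((4:ℝ) ^ k - 1) / 3 * ε ≤ 1 := by
        rw [hε]
        rw [div_mul_div_comm]
        rw [div_le_one (by positivity)]
        nlinarith
      linarith
    have ub : T (x.1 + (k : ℤ), x.2) - T (x.1, x.2) ≤ 2 * c := by
      have h1 := abs_le.1 (hc (x.1 + (k : ℤ), x.2))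
      have h2 := abs_le.1 (hc (x.1, x.2))
      linarith [h1.2, h2.1]
    rw [tele] at lb
    linarith
  intro p
  have := hub p
  simp only [hu] at this
  linarith

theorem stmt_13 (T : ℤ × ℤ → ℝ)
    (hbdd : ∃ c : ℝ, ∀ p : ℤ × ℤ, |T p| ≤ c)
    (hharm : ∀ n m : ℤ, T (n, m) =
      (1/4) * (T (n-1, m) + T (n+1, m) + T (n, m-1) + T (n, m+1))) :
    ∀ p q : ℤ × ℤ, T p = T q := by
  obtain ⟨c, hc⟩ := hbdd
  -- horizontal shift invariance
  have hA := shift_nonpos T c hc hharm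
  have hB := shift_nonpos (fun p => -T p) c
    (fun p => by simpa using hc p)
    (fun n m => by have := hharm n m; linarith)
  have hH : ∀ a b : ℤ, T (a + 1, b) = T (a, b) := by
    intro a b
    have h1 := hA (a, b)
    have h2 := hB (a, b)
    simp only [] at h1 h2
    linarith
  -- vertical: apply to the swapped function
  set S : ℤ × ℤ → ℝ := fun p => T (p.2, p.1) with hS
  have hSharm : ∀ n m : ℤ, S (n, m) =
      (1/4) * (S (n-1, m) + S (n+1, m) + S (n, m-1) + S (n, m+1)) := by
    intro n m
    have := hharm m n
    simp only [hS]
    linarith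
  have hC := shift_nonpos S c (fun p => hc _) hSharm
  have hD := shift_nonpos (fun p => -S p) c (fun p => by simpa using hc _)
    (fun n m => by have := hSharm n m; linarith)
  have hV : ∀ a b : ℤ, T (a, b + 1) = T (a, b) := by
    intro a b
    have h1 := hC (b, a)
    have h2 := hD (b, a)
    simp only [hS] at h1 h2
    linarith
  -- shift invariance by arbitrary amounts
  have hHa : ∀ (d : ℤ) (a b : ℤ), T (a + d, b) = T (a, b) := by
    intro d
    induction d using Int.induction_on with
    | zero => simp
    | succ i ih =>
        intro a b
        have : a + ((i : ℤ) + 1) = (a + i) + 1 := by ring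
        rw [this, hH, ih]
    | pred i ih =>
        intro a b
        have h := hH (a + (-(i : ℤ) - 1)) b
        have : a + (-(i : ℤ) - 1) + 1 = a + (-(i : ℤ)) := by ring
        rw [this] at h
        rw [← h, ih]
  have hVa : ∀ (d : ℤ) (a b : ℤ), T (a, b + d) = T (a, b) := by
    intro d
    induction d using Int.induction_on with
    | zero => simp
    | succ i ih =>
        intro a b
        have : b + ((i : ℤ) + 1) = (b + i) + 1 := by ring
        rw [this, hV, ih]
    | pred i ih =>
        intro a b
        have h := hV a (b + (-(i : ℤ) - 1))
        have : b + (-(i : ℤ) - 1) + 1 = b + (-(i : ℤ)) := by ring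
        rw [this] at h
        rw [← h, ih]
  intro p q
  have e1 : q.1 = p.1 + (q.1 - p.1) := by ring
  have e2 : q.2 = p.2 + (q.2 - p.2) := by ring
  calc T p = T (p.1, p.2) := rfl
    _ = T (p.1, q.2) := by rw [e2, hVa]
    _ = T (q.1, q.2) := by rw [e1, hHa]
    _ = T q := rfl
end
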